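/- The contiguity shift operators satisfy the commutation relation E_+(k + (-2,1)) ∘ E_-(k) = E_-(k + (2,-1)) ∘ E_+(k) + k_1 as operators on Laurent polynomials. -/

import Mathlib

open Polynomial

/-- `f : ℂ → ℂ` is (the evaluation of) a Laurent polynomial. -/
def IsLaurent (f : ℂ → ℂ) : Prop :=
  ∃ (p : Polynomial ℂ) (n : ℕ), ∀ z : ℂ, z ≠ 0 → f z = p.eval z / z ^ n

/-- The contiguity shift operator `E₊(k) = ((1+z⁻¹)/(1-z⁻¹)) z∂z + k₂ - 1/2`. -/
noncomputable def Eplus (k1 k2 : ℂ) (f : ℂ → ℂ) : ℂ → ℂ := fun z =>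
  ((1 + z⁻¹) / (1 - z⁻¹)) * (z * deriv f z) + (k2 - 1/2) * f z

/-- The contiguity shift operator `E₋(k) = ((1-z⁻¹)/(1+z⁻¹)) z∂z + k₁ + k₂ - 1/2`. -/
noncomputable def Eminus (k1 k2 : ℂ) (f : ℂ → ℂ) : ℂ → ℂ := fun z =>
  ((1 - z⁻¹) / (1 + z⁻¹)) * (z * deriv f z) + (k1 + k2 - 1/2) * f z

open Filter in
theorem laurent_deriv' (p : ℂ[X]) (n : ℕ) (w : ℂ) (hw : w ≠ 0) :
    HasDerivAt (fun z : ℂ => p.eval z / z ^ n)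
      ((X * derivative p - C (n : ℂ) * p).eval w / w ^ (n + 1)) w := by
  have h : HasDerivAt (fun z : ℂ => p.eval z / z ^ n) _ w :=
    (p.hasDerivAt w).div (hasDerivAt_pow n w) (pow_ne_zero n hw)
  convert h using 1
  simp only [eval_sub, eval_mul, eval_X, eval_C]
  rcases n with _ | m
  · simp; field_simp
  · have : (m + 1 : ℕ) - 1 = m := rfl
    rw [this]
    field_simp
    ring

open Filter in
theorem laurent_hasDeriv' (f : ℂ → ℂ) (hf : IsLaurent f) :
    ∃ f1 : ℂ → ℂ, IsLaurent f1 ∧ ∀ w : ℂ, w ≠ 0 → HasDerivAt f (f1 w) w := by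
  obtain ⟨p, n, hp⟩ := hf
  refine ⟨fun w => (X * derivative p - C (n : ℂ) * p).eval w / w ^ (n + 1),
    ⟨_, _, fun z _ => rfl⟩, fun w hw => ?_⟩
  have h := laurent_deriv' p n w hw
  apply h.congr_of_eventuallyEq
  filter_upwards [eventually_ne_nhds hw] with x hx
  exact hp x hx

open Filter in
set_option maxHeartbeats 1000000 in
theorem key_commutation (k1 k2 : ℂ) (f f1 f2 : ℂ → ℂ)
    (h1 : ∀ w : ℂ, w ≠ 0 → HasDerivAt f (f1 w) w)
    (h2 : ∀ w : ℂ, w ≠ 0 → HasDerivAt f1 (f2 w) w)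
    (z : ℂ) (hz : z ≠ 0) (hz2 : z ^ 2 ≠ 1) :
    Eplus (k1 - 2) (k2 + 1) (Eminus k1 k2 f) z =
      Eminus (k1 + 2) (k2 - 1) (Eplus k1 k2 f) z + k1 * f z := by
  have hz1 : z ≠ 1 := fun h => hz2 (by rw [h]; norm_num)
  have hzn1 : z ≠ -1 := fun h => hz2 (by rw [h]; norm_num)
  have hzm : z - 1 ≠ 0 := sub_ne_zero.2 hz1
  have hzp : z + 1 ≠ 0 := by
    intro h; exact hzn1 (by linear_combination h)
  have key2 : ∀ w : ℂ, w ≠ 0 → w + 1 ≠ 0 → (1 - w⁻¹) / (1 + w⁻¹) = (w - 1) / (w + 1) := by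
    intro w hw hwp
    have e2 : (1 : ℂ) + w⁻¹ = (w + 1) / w := by field_simp
    have hwpi : (1 : ℂ) + w⁻¹ ≠ 0 := by rw [e2]; exact div_ne_zero hwp hw
    rw [div_eq_div_iff hwpi hwp]
    field_simp
  have key3 : ∀ w : ℂ, w ≠ 0 → w - 1 ≠ 0 → (1 + w⁻¹) / (1 - w⁻¹) = (w + 1) / (w - 1) := by
    intro w hw hwm
    have e1 : (1 : ℂ) - w⁻¹ = (w - 1) / w := by field_simp
    have hwmi : (1 : ℂ) - w⁻¹ ≠ 0 := by rw [e1]; exact div_ne_zero hwm hw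
    rw [div_eq_div_iff hwmi hwm]
    field_simp
  have hev0 : ∀ᶠ w : ℂ in nhds z, w ≠ 0 := eventually_ne_nhds hz
  have hevm : ∀ᶠ w : ℂ in nhds z, w - 1 ≠ 0 := by
    filter_upwards [eventually_ne_nhds hz1] with w hw h
    exact hw (by linear_combination h)
  have hevp : ∀ᶠ w : ℂ in nhds z, w + 1 ≠ 0 := by
    filter_upwards [eventually_ne_nhds hzn1] with w hw h
    exact hw (by linear_combination h)
  set G : ℂ → ℂ := fun w => (w - 1) / (w + 1) * (w * f1 w) + (k1 + k2 - 1/2) * f w with hG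
  have hevG : Eminus k1 k2 f =ᶠ[nhds z] G := by
    filter_upwards [hev0, hevp] with w hw hwp
    show ((1 - w⁻¹) / (1 + w⁻¹)) * (w * deriv f w) + (k1 + k2 - 1/2) * f w = _
    rw [(h1 w hw).deriv, key2 w hw hwp]
  set H : ℂ → ℂ := fun w => (w + 1) / (w - 1) * (w * f1 w) + (k2 - 1/2) * f w with hH
  have hevH : Eplus k1 k2 f =ᶠ[nhds z] H := by
    filter_upwards [hev0, hevm] with w hw hwm
    show ((1 + w⁻¹) / (1 - w⁻¹)) * (w * deriv f w) + (k2 - 1/2) * f w = _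
    rw [(h1 w hw).deriv, key3 w hw hwm]
  have hb : HasDerivAt (fun w : ℂ => (w - 1) / (w + 1))
      ((1 * (z + 1) - (z - 1) * 1) / (z + 1) ^ 2) z :=
    ((hasDerivAt_id z).sub_const 1).div ((hasDerivAt_id z).add_const 1) hzp
  have ha : HasDerivAt (fun w : ℂ => (w + 1) / (w - 1))
      ((1 * (z - 1) - (z + 1) * 1) / (z - 1) ^ 2) z :=
    ((hasDerivAt_id z).add_const 1).div ((hasDerivAt_id z).sub_const 1) hzm
  have hwf1 : HasDerivAt (fun w : ℂ => w * f1 w) (1 * f1 z + z * f2 z) z :=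
    (hasDerivAt_id z).mul (h2 z hz)
  have hGd : HasDerivAt G
      (((1 * (z + 1) - (z - 1) * 1) / (z + 1) ^ 2) * (z * f1 z)
        + (z - 1) / (z + 1) * (1 * f1 z + z * f2 z)
        + (k1 + k2 - 1/2) * f1 z) z :=
    (hb.mul hwf1).add ((h1 z hz).const_mul (k1 + k2 - 1/2))
  have hHd : HasDerivAt H
      (((1 * (z - 1) - (z + 1) * 1) / (z - 1) ^ 2) * (z * f1 z)
        + (z + 1) / (z - 1) * (1 * f1 z + z * f2 z)
        + (k2 - 1/2) * f1 z) z :=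
    (ha.mul hwf1).add ((h1 z hz).const_mul (k2 - 1/2))
  have hdG : deriv (Eminus k1 k2 f) z = _ := hevG.deriv_eq.trans hGd.deriv
  have hdH : deriv (Eplus k1 k2 f) z = _ := hevH.deriv_eq.trans hHd.deriv
  show ((1 + z⁻¹) / (1 - z⁻¹)) * (z * deriv (Eminus k1 k2 f) z) + (k2 + 1 - 1/2) * (Eminus k1 k2 f z)
      = ((1 - z⁻¹) / (1 + z⁻¹)) * (z * deriv (Eplus k1 k2 f) z)
        + (k1 + 2 + (k2 - 1) - 1/2) * (Eplus k1 k2 f z) + k1 * f z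
  rw [hdG, hdH, hevG.eq_of_nhds, hevH.eq_of_nhds, key2 z hz hzp, key3 z hz hzm]
  simp only [hG, hH]
  simp only [div_eq_mul_inv, ← inv_pow]
  have ha' : (z + 1) * (z + 1)⁻¹ = 1 := mul_inv_cancel₀ hzp
  have hb' : (z - 1) * (z - 1)⁻¹ = 1 := mul_inv_cancel₀ hzm
  linear_combination
    (-2 * f1 z + 2 * ((z-1)⁻¹)^2 * f1 z + z * f1 z + 2 * z * (z-1)⁻¹ * f1 z
      - 4 * z * ((z-1)⁻¹)^2 * f1 z + 2 * z^2 * ((z-1)⁻¹)^2 * f1 z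
      + 2 * z^2 * (z+1)⁻¹ * (z-1)⁻¹ * f1 z) * ha' +
    (2 * f1 z - 2 * (z-1)⁻¹ * f1 z - 2 * (z+1)⁻¹ * f1 z
      + 2 * (z+1)⁻¹ * (z-1)⁻¹ * f1 z - z * f1 z + 2 * z * (z-1)⁻¹ * f1 z) * hb'

/-- `E₊(k + (-2,1)) ∘ E₋(k) = E₋(k + (2,-1)) ∘ E₊(k) + k₁` on Laurent polynomials. -/
theorem stmt3 (k1 k2 : ℂ) (f : ℂ → ℂ) (hf : IsLaurent f)
    (z : ℂ) (hz : z ≠ 0) (hz2 : z ^ 2 ≠ 1) :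
    Eplus (k1 - 2) (k2 + 1) (Eminus k1 k2 f) z =
      Eminus (k1 + 2) (k2 - 1) (Eplus k1 k2 f) z + k1 * f z := by
  obtain ⟨f1, hf1L, hf1⟩ := laurent_hasDeriv' f hf
  obtain ⟨f2, _, hf2⟩ := laurent_hasDeriv' f1 hf1L
  exact key_commutation k1 k2 f f1 f2 hf1 hf2 z hz hz2
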